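/- Let W ⊆ ±[1,m] and k-j ≥ 0. The number of (k-j)-element subsets V'' ⊆ ±[1,m] with V'' ∩ W = ∅, such that every v'' ∈ V'' satisfies -v'' ∉ W, and V'' is free of opposites (v ∈ V'' implies -v ∉ V''), equals C(m - |W ∪ (-W)|/2, k-j)·2^{k-j}. -/

import Mathlib

open scoped Classical

/-- The set ±[1,m] = {-m,…,-1,1,…,m} of nonzero integers of absolute value at most m. -/
noncomputable def pmSet (m : ℕ) : Finset ℤ := (Finset.Icc (-(m : ℤ)) (m : ℤ)).erase 0

private lemma count_sym (S : Finset ℤ) (h0 : (0:ℤ) ∉ S) (hneg : ∀ x ∈ S, -x ∈ S) (n : ℕ) :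
    (S.powerset.filter (fun V => V.card = n ∧ ∀ v ∈ V, -v ∉ V)).card
      = ((S.filter (fun x => 0 < x)).card).choose n * 2 ^ n := by
  classical
  set P := S.filter (fun x => 0 < x) with hP
  set Fil := S.powerset.filter (fun V => V.card = n ∧ ∀ v ∈ V, -v ∉ V) with hFil
  have hmem : ∀ V, V ∈ Fil ↔ V ⊆ S ∧ V.card = n ∧ ∀ v ∈ V, -v ∉ V := by
    intro V
    simp [hFil, Finset.mem_filter, Finset.mem_powerset, and_assoc]
  -- injectivity of abs on opposite-free sets
  have habsinj : ∀ V : Finset ℤ, (∀ v ∈ V, -v ∉ V) →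
      Set.InjOn (fun x : ℤ => |x|) V := by
    intro V hV a ha b hb hab
    simp only at hab
    rcases abs_eq_abs.mp hab with h | h
    · exact h
    · exact absurd (h ▸ ha) (hV b hb)
  have hmain : Fil.card = ∑ A ∈ P.powersetCard n,
      (Fil.filter (fun V => V.image (fun x => |x|) = A)).card := by
    apply Finset.card_eq_sum_card_fiberwise
    intro V hV
    rw [Finset.mem_coe, hmem] at hV
    obtain ⟨hVS, hVc, hVo⟩ := hV
    rw [Finset.mem_coe, Finset.mem_powersetCard]
    constructor
    · intro a ha
      simp only [Finset.mem_image] at ha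
      obtain ⟨x, hx, rfl⟩ := ha
      have hxS := hVS hx
      have hx0 : x ≠ 0 := by rintro rfl; exact h0 hxS
      rw [hP, Finset.mem_filter]
      refine ⟨?_, abs_pos.mpr hx0⟩
      rcases abs_choice x with h | h
      · rw [h]; exact hxS
      · rw [h]; exact hneg x hxS
    · rw [Finset.card_image_of_injOn (habsinj V hVo), hVc]
  rw [hmain]
  have hfiber : ∀ A ∈ P.powersetCard n,
      (Fil.filter (fun V => V.image (fun x => |x|) = A)).card = 2 ^ n := by
    intro A hA
    rw [Finset.mem_powersetCard] at hA
    obtain ⟨hAP, hAc⟩ := hA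
    have hApos : ∀ a ∈ A, 0 < a := fun a ha => (Finset.mem_filter.mp (hAP ha)).2
    have hAS : ∀ a ∈ A, a ∈ S := fun a ha => (Finset.mem_filter.mp (hAP ha)).1
    rw [← hAc, ← Finset.card_powerset]
    apply Finset.card_bij' (fun V _ => V.filter (fun x => 0 < x))
      (fun T _ => T ∪ (A \ T).image (fun a => -a))
    · -- maps into powerset
      intro V hV
      rw [Finset.mem_filter] at hV
      obtain ⟨hV1, hV2⟩ := hV
      rw [Finset.mem_powerset]
      intro x hx
      rw [Finset.mem_filter] at hx
      rw [← hV2]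
      rw [Finset.mem_image]
      exact ⟨x, hx.1, abs_of_pos hx.2⟩
    · -- inverse maps into fiber
      intro T hT
      rw [Finset.mem_powerset] at hT
      have hTpos : ∀ t ∈ T, 0 < t := fun t ht => hApos t (hT ht)
      have hnoopp : ∀ v ∈ T ∪ (A \ T).image (fun a => -a), -v ∉ T ∪ (A \ T).image (fun a => -a) := by
        intro v hv hnv
        simp only [Finset.mem_union, Finset.mem_image, Finset.mem_sdiff] at hv hnv
        rcases hv with hv | ⟨a, ⟨haA, haT⟩, rfl⟩
        · have hvpos := hTpos v hv
          rcases hnv with hnv | ⟨a, ⟨haA, haT⟩, hae⟩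
          · exact absurd (hTpos _ hnv) (by linarith)
          · have : a = v := by linarith [neg_injective hae]
            exact haT (this ▸ hv)
        · have hapos := hApos a haA
          rw [neg_neg] at hnv
          rcases hnv with hnv | ⟨b, ⟨hbA, hbT⟩, hbe⟩
          · exact haT hnv
          · exact absurd (hApos b hbA) (by linarith)
      have himg : (T ∪ (A \ T).image (fun a => -a)).image (fun x => |x|) = A := by
        apply Finset.Subset.antisymm
        · intro x hx
          simp only [Finset.mem_image, Finset.mem_union, Finset.mem_sdiff] at hx
          obtain ⟨y, hy, rfl⟩ := hx
          rcases hy with hy | ⟨a, ⟨haA, haT⟩, rfl⟩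
          · rw [abs_of_pos (hTpos y hy)]; exact hT hy
          · rw [abs_neg, abs_of_pos (hApos a haA)]; exact haA
        · intro a ha
          simp only [Finset.mem_image, Finset.mem_union, Finset.mem_sdiff]
          by_cases haT : a ∈ T
          · exact ⟨a, Or.inl haT, abs_of_pos (hApos a ha)⟩
          · exact ⟨-a, Or.inr ⟨a, ⟨ha, haT⟩, rfl⟩, by rw [abs_neg, abs_of_pos (hApos a ha)]⟩
      rw [Finset.mem_filter, hmem]
      refine ⟨⟨?_, ?_, hnoopp⟩, himg⟩
      · intro x hx
        simp only [Finset.mem_union, Finset.mem_image, Finset.mem_sdiff] at hx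
        rcases hx with hx | ⟨a, ⟨haA, _⟩, rfl⟩
        · exact hAS x (hT hx)
        · exact hneg a (hAS a haA)
      · calc (T ∪ (A \ T).image (fun a => -a)).card
            = ((T ∪ (A \ T).image (fun a => -a)).image (fun x => |x|)).card :=
              (Finset.card_image_of_injOn (habsinj _ hnoopp)).symm
          _ = A.card := by rw [himg]
          _ = n := hAc
    · -- left inverse
      intro V hV
      rw [Finset.mem_filter, hmem] at hV
      obtain ⟨⟨hVS, hVc, hVo⟩, himg⟩ := hV
      ext x
      simp only [Finset.mem_union, Finset.mem_image, Finset.mem_sdiff, Finset.mem_filter]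
      constructor
      · rintro (⟨hx, _⟩ | ⟨a, ⟨haA, haT⟩, rfl⟩)
        · exact hx
        · -- a ∈ A, a ∉ V.filter pos ; a = |w| for some w ∈ V
          rw [← himg, Finset.mem_image] at haA
          obtain ⟨w, hw, rfl⟩ := haA
          have hw0 : w ≠ 0 := by rintro rfl; exact h0 (hVS hw)
          rcases lt_or_gt_of_ne hw0 with h | h
          · rw [abs_of_neg h, neg_neg]; exact hw
          · exact absurd ⟨by rw [abs_of_pos h]; exact hw, abs_pos.mpr hw0⟩ haT
      · intro hx
        have hx0 : x ≠ 0 := by rintro rfl; exact h0 (hVS hx)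
        rcases lt_or_gt_of_ne hx0 with h | h
        · right
          refine ⟨-x, ⟨?_, ?_⟩, neg_neg x⟩
          · rw [← himg, Finset.mem_image]; exact ⟨x, hx, abs_of_neg h⟩
          · rintro ⟨hnx, -⟩
            exact hVo x hx hnx
        · exact Or.inl ⟨hx, h⟩
    · -- right inverse
      intro T hT
      rw [Finset.mem_powerset] at hT
      have hTpos : ∀ t ∈ T, 0 < t := fun t ht => hApos t (hT ht)
      ext x
      simp only [Finset.mem_filter, Finset.mem_union, Finset.mem_image, Finset.mem_sdiff]
      constructor
      · rintro ⟨hx | ⟨a, ⟨haA, haT⟩, rfl⟩, hxpos⟩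
        · exact hx
        · exact absurd (hApos a haA) (by linarith)
      · intro hx
        exact ⟨Or.inl hx, hTpos x hx⟩
  rw [Finset.sum_congr rfl hfiber, Finset.sum_const, smul_eq_mul,
    Finset.card_powersetCard]

theorem stmt4 (m : ℕ) (hm : 1 ≤ m) (W : Finset ℤ) (hW : W ⊆ pmSet m)
    (j k : ℕ) (hjk : j ≤ k) :
    ((pmSet m).powerset.filter
        (fun V => V.card = k - j ∧ V ∩ W = ∅ ∧ (∀ v ∈ V, -v ∉ W) ∧ ∀ v ∈ V, -v ∉ V)).card
      = (m - (W ∪ W.image (fun w => -w)).card / 2).choose (k - j) * 2 ^ (k - j) := by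
  classical
  set n := k - j
  set U := W ∪ W.image (fun w => -w) with hU
  -- basic facts about pmSet
  have hpm : ∀ x : ℤ, x ∈ pmSet m ↔ x ≠ 0 ∧ -(m:ℤ) ≤ x ∧ x ≤ m := by
    intro x; simp [pmSet, Finset.mem_erase, Finset.mem_Icc, and_assoc]
  have hpmneg : ∀ x ∈ pmSet m, -x ∈ pmSet m := by
    intro x hx; rw [hpm] at hx ⊢; exact ⟨neg_ne_zero.mpr hx.1, by linarith [hx.2.1, hx.2.2], by linarith [hx.2.1]⟩
  have h0pm : (0:ℤ) ∉ pmSet m := by simp [pmSet]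
  have hUpm : U ⊆ pmSet m := by
    intro x hx
    rw [hU, Finset.mem_union] at hx
    rcases hx with hx | hx
    · exact hW hx
    · rw [Finset.mem_image] at hx
      obtain ⟨w, hw, rfl⟩ := hx
      exact hpmneg w (hW hw)
  have hUneg : ∀ x ∈ U, -x ∈ U := by
    intro x hx
    rw [hU, Finset.mem_union] at hx ⊢
    rcases hx with hx | hx
    · right; rw [Finset.mem_image]; exact ⟨x, hx, rfl⟩
    · left; rw [Finset.mem_image] at hx; obtain ⟨w, hw, rfl⟩ := hx; rwa [neg_neg]
  set S := pmSet m \ U with hS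
  have h0S : (0:ℤ) ∉ S := fun h => h0pm (Finset.mem_sdiff.mp h).1
  have hSneg : ∀ x ∈ S, -x ∈ S := by
    intro x hx
    rw [hS, Finset.mem_sdiff] at hx ⊢
    refine ⟨hpmneg x hx.1, fun h => hx.2 ?_⟩
    have := hUneg _ h; rwa [neg_neg] at this
  -- rewrite the filter set
  have hset : (pmSet m).powerset.filter
        (fun V => V.card = n ∧ V ∩ W = ∅ ∧ (∀ v ∈ V, -v ∉ W) ∧ ∀ v ∈ V, -v ∉ V)
      = S.powerset.filter (fun V => V.card = n ∧ ∀ v ∈ V, -v ∉ V) := by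
    ext V
    simp only [Finset.mem_filter, Finset.mem_powerset]
    constructor
    · rintro ⟨hVpm, hc, hiW, hnW, hopp⟩
      refine ⟨?_, hc, hopp⟩
      intro v hv
      rw [hS, Finset.mem_sdiff]
      refine ⟨hVpm hv, ?_⟩
      rw [hU, Finset.mem_union]
      rintro (h | h)
      · exact Finset.eq_empty_iff_forall_notMem.mp hiW v (Finset.mem_inter.mpr ⟨hv, h⟩)
      · rw [Finset.mem_image] at h
        obtain ⟨w, hw, hwe⟩ := h
        have hvw : -v = w := by rw [← hwe, neg_neg]
        exact hnW v hv (hvw ▸ hw)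
    · rintro ⟨hVS, hc, hopp⟩
      have hVU : ∀ v ∈ V, v ∉ U := fun v hv => (Finset.mem_sdiff.mp (hVS hv)).2
      refine ⟨fun v hv => (Finset.mem_sdiff.mp (hVS hv)).1, hc, ?_, ?_, hopp⟩
      · rw [Finset.eq_empty_iff_forall_notMem]
        intro v hv
        rw [Finset.mem_inter] at hv
        exact hVU v hv.1 (hU ▸ Finset.mem_union_left _ hv.2)
      · intro v hv hnv
        exact hVU v hv (hU ▸ Finset.mem_union_right _ (Finset.mem_image.mpr ⟨-v, hnv, neg_neg v⟩))
  rw [hset, count_sym S h0S hSneg n]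
  -- now compute the cards
  congr 2
  -- positive part of pmSet is Icc 1 m
  have hpmpos : (pmSet m).filter (fun x => 0 < x) = Finset.Icc (1:ℤ) m := by
    ext x
    simp only [Finset.mem_filter, hpm, Finset.mem_Icc]
    constructor
    · rintro ⟨⟨_, _, h2⟩, hpos⟩; exact ⟨hpos, h2⟩
    · rintro ⟨h1, h2⟩; exact ⟨⟨by linarith, by linarith, h2⟩, by linarith⟩
  have hSpos : S.filter (fun x => 0 < x)
      = ((pmSet m).filter (fun x => 0 < x)) \ (U.filter (fun x => 0 < x)) := by
    ext x
    simp only [hS, Finset.mem_filter, Finset.mem_sdiff, not_and]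
    constructor
    · rintro ⟨⟨h1, h2⟩, h3⟩; exact ⟨⟨h1, h3⟩, fun h _ => h2 h⟩
    · rintro ⟨⟨h1, h3⟩, h2⟩; exact ⟨⟨h1, fun h => (h2 h h3).elim⟩, h3⟩
  have hIcc : ((pmSet m).filter (fun x => 0 < x)).card = m := by
    rw [hpmpos, Int.card_Icc]
    simp
  have hsub : U.filter (fun x => 0 < x) ⊆ (pmSet m).filter (fun x => 0 < x) :=
    Finset.filter_subset_filter _ hUpm
  have hScard : (S.filter (fun x => 0 < x)).card
      = m - (U.filter (fun x => 0 < x)).card := by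
    rw [hSpos, Finset.card_sdiff_of_subset hsub, hIcc]
  -- |U| = 2 * |U⁺|
  have hUsplit : U = U.filter (fun x => 0 < x) ∪ U.filter (fun x => x < 0) := by
    ext x
    simp only [Finset.mem_union, Finset.mem_filter]
    constructor
    · intro hx
      have hx0 : x ≠ 0 := by rintro rfl; exact h0pm (hUpm hx)
      rcases lt_or_gt_of_ne hx0 with h | h
      · exact Or.inr ⟨hx, h⟩
      · exact Or.inl ⟨hx, h⟩
    · rintro (⟨hx, -⟩ | ⟨hx, -⟩) <;> exact hx
  have hnegcard : (U.filter (fun x => x < 0)).card = (U.filter (fun x => 0 < x)).card := by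
    refine Finset.card_nbij' (fun x => -x) (fun x => -x) ?_ ?_ ?_ ?_
    · intro x hx
      rw [Finset.mem_coe, Finset.mem_filter] at hx ⊢
      exact ⟨hUneg x hx.1, neg_pos.mpr hx.2⟩
    · intro x hx
      rw [Finset.mem_coe, Finset.mem_filter] at hx ⊢
      exact ⟨hUneg x hx.1, neg_lt_zero.mpr hx.2⟩
    · intro x _; exact neg_neg x
    · intro x _; exact neg_neg x
  have hUcard : U.card = 2 * (U.filter (fun x => 0 < x)).card := by
    have hdisj : Disjoint (U.filter (fun x => 0 < x)) (U.filter (fun x => x < 0)) := by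
      rw [Finset.disjoint_filter]
      intro x _ hx h
      exact absurd hx (by linarith)
    calc U.card = (U.filter (fun x => 0 < x) ∪ U.filter (fun x => x < 0)).card := by
          rw [← hUsplit]
      _ = 2 * (U.filter (fun x => 0 < x)).card := by
          rw [Finset.card_union_of_disjoint hdisj, hnegcard]; ring
  rw [hScard, hUcard]
  omega
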